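/- Let p be a prime and k a perfect field of characteristic p. For every formal Laurent series f ∈ k((t)) that is not a p-th power in k((t)), there exists g ∈ k((t)) such that f − g^p is nonzero and its order (the smallest exponent with nonzero coefficient) is not divisible by p. -/

import Mathlib

open HahnSeries

section Frob

variable {p : ℕ} {k : Type*} [Field k] [CharP k p]

/-- The coefficient of `x ^ p` at `p * a` is the `p`-th power of the coefficient of `x`
at `a`, and the coefficients of `x ^ p` away from multiples of `p` vanish. -/
theorem pow_char_coeff_aux (hp : p.Prime) (x : LaurentSeries k) (c : ℤ) :
    (x ^ p).coeff c = if (p : ℤ) ∣ c then (x.coeff (c / p)) ^ p else 0 := by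
  haveI : Fact p.Prime := ⟨hp⟩
  haveI : CharP (LaurentSeries k) p :=
    charP_of_injective_ringHom (HahnSeries.C_injective (Γ := ℤ) (R := k)) p
  have hp0 : (0 : ℤ) < (p : ℤ) := by exact_mod_cast hp.pos
  rcases eq_or_ne x 0 with rfl | hx
  · simp [zero_pow hp.ne_zero]
  set N : ℤ := |c| with hN
  have hcN : c ≤ (p : ℤ) * N := by
    calc c ≤ |c| := le_abs_self c
    _ ≤ (p : ℤ) * |c| := le_mul_of_one_le_left (abs_nonneg c) (by exact_mod_cast hp.one_lt.le)
  have hdivN : c / (p : ℤ) ≤ N :=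
    le_trans (le_abs_self _) (Int.abs_ediv_le_abs c (p : ℤ))
  set y : LaurentSeries k := ∑ g ∈ Finset.Icc x.order N, HahnSeries.single g (x.coeff g) with hy
  have hycoeff : ∀ e : ℤ, y.coeff e = if e ∈ Finset.Icc x.order N then x.coeff e else 0 := by
    intro e
    rw [hy]
    rw [show (∑ g ∈ Finset.Icc x.order N, HahnSeries.single g (x.coeff g)).coeff e
        = ∑ g ∈ Finset.Icc x.order N, (HahnSeries.single g (x.coeff g)).coeff e from
        map_sum (HahnSeries.coeff.addMonoidHom e) _ _]
    simp only [HahnSeries.coeff_single]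
    by_cases he : e ∈ Finset.Icc x.order N
    · rw [if_pos he]
      refine (Finset.sum_eq_single e (fun b _ hb => if_neg (fun h => hb h.symm))
        (fun h => absurd he h)).trans (if_pos rfl)
    · rw [if_neg he, Finset.sum_eq_zero]
      intro g hg
      refine if_neg ?_
      intro h
      subst h
      exact he hg
  set z : LaurentSeries k := x - y with hz
  have hzcoeff : ∀ e : ℤ, e ≤ N → z.coeff e = 0 := by
    intro e he
    rw [hz, HahnSeries.coeff_sub, hycoeff e]
    by_cases h : e ∈ Finset.Icc x.order N
    · simp [h]
    · have : e < x.order := by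
        simp only [Finset.mem_Icc, not_and_or, not_le] at h
        rcases h with h | h
        · exact h
        · omega
      rw [if_neg h, HahnSeries.coeff_eq_zero_of_lt_order this, sub_zero]
  have hxyz : x = y + z := by rw [hz]; ring
  have hsum : x ^ p = y ^ p + z ^ p := by
    rw [hxyz, add_pow_char]
  have hzp : (z ^ p).coeff c = 0 := by
    rcases eq_or_ne z 0 with hz0 | hz0
    · rw [hz0]; simp [zero_pow hp.ne_zero]
    · have horder : N < z.order := by
        by_contra hcon
        push_neg at hcon
        exact hz0 (HahnSeries.coeff_order_eq_zero.mp (hzcoeff z.order hcon))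
      apply HahnSeries.coeff_eq_zero_of_lt_order
      rw [HahnSeries.order_pow]
      have : (p : ℤ) * N < (p : ℤ) * z.order := by
        exact mul_lt_mul_of_pos_left horder hp0
      calc c ≤ (p : ℤ) * N := hcN
      _ < (p : ℤ) * z.order := this
      _ = p • z.order := by rw [nsmul_eq_mul]
  have hyp : y ^ p = ∑ g ∈ Finset.Icc x.order N,
      HahnSeries.single ((p : ℤ) * g) ((x.coeff g) ^ p) := by
    rw [hy, sum_pow_char]
    refine Finset.sum_congr rfl fun g _ => ?_
    rw [HahnSeries.single_pow, nsmul_eq_mul]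
  have hypc : (y ^ p).coeff c =
      if c / (p : ℤ) ∈ Finset.Icc x.order N ∧ (p : ℤ) ∣ c
      then (x.coeff (c / p)) ^ p else 0 := by
    rw [hyp]
    rw [show (∑ g ∈ Finset.Icc x.order N,
        HahnSeries.single ((p : ℤ) * g) ((x.coeff g) ^ p)).coeff c
        = ∑ g ∈ Finset.Icc x.order N,
          (HahnSeries.single ((p : ℤ) * g) ((x.coeff g) ^ p)).coeff c from
        map_sum (HahnSeries.coeff.addMonoidHom c) _ _]
    simp only [HahnSeries.coeff_single]
    by_cases hdvd : (p : ℤ) ∣ c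
    · obtain ⟨a, ha⟩ := hdvd
      have hpne : (p : ℤ) ≠ 0 := by omega
      have hap : c / (p : ℤ) = a := by rw [ha, Int.mul_ediv_cancel_left _ hpne]
      have hiff : ∀ g : ℤ, (c = (p : ℤ) * g) ↔ a = g := by
        intro g
        constructor
        · intro h; rw [ha] at h; exact mul_left_cancel₀ hpne h
        · rintro rfl; exact ha
      rw [hap]
      by_cases hmem : a ∈ Finset.Icc x.order N
      · rw [if_pos ⟨hmem, ⟨a, ha⟩⟩]
        refine (Finset.sum_eq_single a
          (fun b _ hb => if_neg (fun h => hb (((hiff b).mp h).symm)))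
          (fun h => absurd hmem h)).trans (if_pos ha)
      · rw [if_neg (fun h => hmem h.1), Finset.sum_eq_zero]
        intro g hg
        refine if_neg ?_
        intro h
        have := (hiff g).mp h
        subst this
        exact hmem hg
    · rw [Finset.sum_eq_zero, if_neg (fun h => hdvd h.2)]
      intro g _
      exact if_neg (fun h => hdvd ⟨g, h⟩)
  rw [hsum, HahnSeries.coeff_add, hzp, add_zero, hypc]
  by_cases hdvd : (p : ℤ) ∣ c
  · by_cases hmem : c / (p : ℤ) ∈ Finset.Icc x.order N
    · rw [if_pos ⟨hmem, hdvd⟩, if_pos hdvd]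
    · rw [if_neg (fun h => hmem h.1), if_pos hdvd]
      have : c / (p : ℤ) < x.order := by
        simp only [Finset.mem_Icc, not_and_or, not_le] at hmem
        rcases hmem with h | h
        · exact h
        · omega
      rw [HahnSeries.coeff_eq_zero_of_lt_order this, zero_pow hp.ne_zero]
  · rw [if_neg (fun h => hdvd h.2), if_neg hdvd]

end Frob

/-- Normalization modulo `p`-th powers over `k((t))`, `k` perfect (proof of
Proposition 2.5.1 b)): if `f` is not a `p`-th power then `f − g^p` can be made nonzero
of order prime to `p`. -/
theorem not_pth_power_normalization
    (p : ℕ) (hp : p.Prime) (k : Type*) [Field k] [CharP k p]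
    [ExpChar k p] [PerfectRing k p]
    (f : LaurentSeries k) (hf : ¬ ∃ w : LaurentSeries k, w ^ p = f) :
    ∃ g : LaurentSeries k,
      f - g ^ p ≠ 0 ∧ ¬ (p : ℤ) ∣ (f - g ^ p).order := by
  have hp0 : (0 : ℤ) < (p : ℤ) := by exact_mod_cast hp.pos
  -- construct `g` with `g.coeff n = (f.coeff (p * n))^{1/p}`
  set gc : ℤ → k := fun n => (frobeniusEquiv k p).symm (f.coeff ((p : ℤ) * n)) with hgc
  have hsupp : (Function.support gc).IsPWO := by
    apply Set.IsPWO.mono (f.isPWO_support.image_of_monotone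
      (f := fun m : ℤ => m / (p : ℤ)) ?_)
    · intro n hn
      have hne : f.coeff ((p : ℤ) * n) ≠ 0 := by
        intro h
        apply hn
        rw [hgc]
        simp [h]
      exact ⟨(p : ℤ) * n, hne,
        show (p : ℤ) * n / (p : ℤ) = n from Int.mul_ediv_cancel_left n (by omega)⟩
    · intro a b hab
      exact Int.ediv_le_ediv hp0 hab
  set g : LaurentSeries k := ⟨gc, hsupp⟩ with hg
  have hgcoeff : ∀ n : ℤ, g.coeff n = (frobeniusEquiv k p).symm (f.coeff ((p : ℤ) * n)) :=
    fun n => rfl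
  have key : ∀ c : ℤ, (f - g ^ p).coeff c =
      if (p : ℤ) ∣ c then 0 else f.coeff c := by
    intro c
    rw [HahnSeries.coeff_sub, pow_char_coeff_aux hp]
    by_cases hdvd : (p : ℤ) ∣ c
    · rw [if_pos hdvd, if_pos hdvd, hgcoeff, frobeniusEquiv_symm_pow_p,
        Int.mul_ediv_cancel' hdvd, sub_self]
    · rw [if_neg hdvd, if_neg hdvd, sub_zero]
  have hne : f - g ^ p ≠ 0 := by
    intro h
    exact hf ⟨g, by rw [eq_comm, ← sub_eq_zero]; exact h⟩
  refine ⟨g, hne, fun hdvd => ?_⟩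
  apply hne (HahnSeries.coeff_order_eq_zero.mp ?_)
  rw [key, if_pos hdvd]
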